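/- For every integer n₀ ≥ 2 and every real c > 0, with A and g^λ as in the context, one has (1/(n₀(n₀ − 1))) · Σ_{λ,μ,ν = 1}^{n₀} g^λ · g^μ · g^ν · A(λ,μ,ν)² = 1/((n₀ + 1)·c). -/

import Mathlib

/-- The Fubini–Pick form of the flat hyperbolic affine hypersphere
`x¹ ⋯ x^{n₀+1} = C₀` (Example 2.1 of the paper): if `(a, b, d)` is the
nondecreasing rearrangement of the indices `(x, y, z)`, then the value is
`-((a² - 1)/a²)·c` when `a = b = d`, `((a + 1)/(a·d))·c` when `a = b < d`,
and `0` when `a < b`. -/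
noncomputable def fubiniPickFlat (c : ℝ) (x y z : ℕ) : ℝ :=
  let a := min x (min y z)
  let dd := max x (max y z)
  let b := x + y + z - a - dd
  if a = b then
    (if b = dd then -(((a : ℝ) ^ 2 - 1) / (a : ℝ) ^ 2) * c
     else (((a : ℝ) + 1) / ((a : ℝ) * (dd : ℝ))) * c)
  else 0

/-- The inverse Berwald–Blaschke metric coefficients `g^λ = λ/((λ+1)·c)` of the
flat hyperbolic affine hypersphere. -/
noncomputable def invMetricFlat (c : ℝ) (l : ℕ) : ℝ := (l : ℝ) / (((l : ℝ) + 1) * c)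

/-- The Pick invariant of the flat hyperbolic affine hypersphere equals
`1/((n₀ + 1)·c)`, which is the negative of its affine mean curvature. -/
lemma fpf_zero (c : ℝ) {x y z : ℕ}
    (h : min x (min y z) ≠ x + y + z - min x (min y z) - max x (max y z)) :
    fubiniPickFlat c x y z = 0 := by
  simp only [fubiniPickFlat]
  exact if_neg h

lemma fpf_pair (c : ℝ) {x y z a d : ℕ} (hd : a < d)
    (hmin : min x (min y z) = a) (hmax : max x (max y z) = d)
    (hsum : x + y + z = a + a + d) :
    fubiniPickFlat c x y z = (((a : ℝ) + 1) / ((a : ℝ) * (d : ℝ))) * c := by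
  have hb : x + y + z - a - d = a := by omega
  simp only [fubiniPickFlat, hmin, hmax, hb, if_pos rfl, if_neg (Nat.ne_of_lt hd), if_true]

lemma fpf_diag (c : ℝ) (a : ℕ) :
    fubiniPickFlat c a a a = -(((a : ℝ) ^ 2 - 1) / (a : ℝ) ^ 2) * c := by
  have h1 : min a (min a a) = a := by omega
  have h2 : max a (max a a) = a := by omega
  have hb : a + a + a - a - a = a := by omega
  simp only [fubiniPickFlat, h1, h2, hb, if_pos rfl, if_true]

noncomputable def pickTerm (c : ℝ) (l m v : ℕ) : ℝ :=
  invMetricFlat c l * invMetricFlat c m * invMetricFlat c v * (fubiniPickFlat c l m v) ^ 2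

lemma pickTerm_pair_val (c : ℝ) (hc : 0 < c) {a N : ℕ} (ha : 0 < a) (h : a < N) :
    invMetricFlat c a * invMetricFlat c a * invMetricFlat c N *
      ((((a : ℝ) + 1) / ((a : ℝ) * (N : ℝ))) * c) ^ 2
    = 1 / ((N : ℝ) * ((N : ℝ) + 1) * c) := by
  have ha' : (0:ℝ) < (a:ℝ) := by exact_mod_cast ha
  have hN' : (0:ℝ) < (N:ℝ) := by exact_mod_cast Nat.lt_of_lt_of_le ha (Nat.le_of_lt h)
  have h1 : ((a:ℝ) + 1) ≠ 0 := by positivity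
  have h2 : ((N:ℝ) + 1) ≠ 0 := by positivity
  simp only [invMetricFlat]
  field_simp

lemma pickTerm_aaN (c : ℝ) (hc : 0 < c) {a N : ℕ} (ha : 0 < a) (h : a < N) :
    pickTerm c a a N = 1 / ((N : ℝ) * ((N : ℝ) + 1) * c) := by
  rw [pickTerm, fpf_pair c h (by omega) (by omega) (by omega)]
  exact pickTerm_pair_val c hc ha h

lemma pickTerm_aNa (c : ℝ) (hc : 0 < c) {a N : ℕ} (ha : 0 < a) (h : a < N) :
    pickTerm c a N a = 1 / ((N : ℝ) * ((N : ℝ) + 1) * c) := by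
  rw [pickTerm, fpf_pair c h (by omega) (by omega) (by omega)]
  rw [show invMetricFlat c a * invMetricFlat c N * invMetricFlat c a
      = invMetricFlat c a * invMetricFlat c a * invMetricFlat c N by ring]
  exact pickTerm_pair_val c hc ha h

lemma pickTerm_Naa (c : ℝ) (hc : 0 < c) {a N : ℕ} (ha : 0 < a) (h : a < N) :
    pickTerm c N a a = 1 / ((N : ℝ) * ((N : ℝ) + 1) * c) := by
  rw [pickTerm, fpf_pair c h (by omega) (by omega) (by omega)]
  rw [show invMetricFlat c N * invMetricFlat c a * invMetricFlat c a
      = invMetricFlat c a * invMetricFlat c a * invMetricFlat c N by ring]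
  exact pickTerm_pair_val c hc ha h

lemma pickTerm_diag (c : ℝ) (hc : 0 < c) {N : ℕ} (hN : 0 < N) :
    pickTerm c N N N = ((N : ℝ) - 1) ^ 2 / ((N : ℝ) * ((N : ℝ) + 1) * c) := by
  rw [pickTerm, fpf_diag]
  have hN' : (0:ℝ) < (N:ℝ) := by exact_mod_cast hN
  have h2 : ((N:ℝ) + 1) ≠ 0 := by positivity
  simp only [invMetricFlat]
  field_simp
  ring

lemma pickTerm_zero (c : ℝ) {x y z : ℕ}
    (h : min x (min y z) ≠ x + y + z - min x (min y z) - max x (max y z)) :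
    pickTerm c x y z = 0 := by
  rw [pickTerm, fpf_zero c h]
  ring

lemma sum_vlast (n : ℕ) (c : ℝ) (hc : 0 < c) :
    ∑ l : Fin n, ∑ m : Fin n, pickTerm c (l.1 + 1) (m.1 + 1) (n + 1)
    = (n : ℝ) * (1 / (((n : ℝ) + 1) * (((n : ℝ) + 1) + 1) * c)) := by
  have key : ∀ l : Fin n, ∑ m : Fin n, pickTerm c (l.1 + 1) (m.1 + 1) (n + 1)
      = 1 / (((n : ℝ) + 1) * (((n : ℝ) + 1) + 1) * c) := by
    intro l
    rw [Finset.sum_eq_single l]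
    · rw [pickTerm_aaN c hc (by omega) (by omega : l.1 + 1 < n + 1)]
      push_cast
      ring
    · intro m _ hm
      have : m.1 ≠ l.1 := fun h => hm (Fin.ext h)
      exact pickTerm_zero c (by have := l.2; have := m.2; omega)
    · intro h
      exact absurd (Finset.mem_univ l) h
  rw [Finset.sum_congr rfl fun l _ => key l]
  simp [Finset.sum_const]

lemma sum_mlast (n : ℕ) (c : ℝ) (hc : 0 < c) :
    ∑ l : Fin n, ∑ v : Fin n, pickTerm c (l.1 + 1) (n + 1) (v.1 + 1)
    = (n : ℝ) * (1 / (((n : ℝ) + 1) * (((n : ℝ) + 1) + 1) * c)) := by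
  have key : ∀ l : Fin n, ∑ v : Fin n, pickTerm c (l.1 + 1) (n + 1) (v.1 + 1)
      = 1 / (((n : ℝ) + 1) * (((n : ℝ) + 1) + 1) * c) := by
    intro l
    rw [Finset.sum_eq_single l]
    · rw [pickTerm_aNa c hc (by omega) (by omega : l.1 + 1 < n + 1)]
      push_cast
      ring
    · intro v _ hv
      have : v.1 ≠ l.1 := fun h => hv (Fin.ext h)
      exact pickTerm_zero c (by have := l.2; have := v.2; omega)
    · intro h
      exact absurd (Finset.mem_univ l) h
  rw [Finset.sum_congr rfl fun l _ => key l]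
  simp [Finset.sum_const]

lemma sum_llast (n : ℕ) (c : ℝ) (hc : 0 < c) :
    ∑ m : Fin n, ∑ v : Fin n, pickTerm c (n + 1) (m.1 + 1) (v.1 + 1)
    = (n : ℝ) * (1 / (((n : ℝ) + 1) * (((n : ℝ) + 1) + 1) * c)) := by
  have key : ∀ m : Fin n, ∑ v : Fin n, pickTerm c (n + 1) (m.1 + 1) (v.1 + 1)
      = 1 / (((n : ℝ) + 1) * (((n : ℝ) + 1) + 1) * c) := by
    intro m
    rw [Finset.sum_eq_single m]
    · rw [pickTerm_Naa c hc (by omega) (by omega : m.1 + 1 < n + 1)]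
      push_cast
      ring
    · intro v _ hv
      have : v.1 ≠ m.1 := fun h => hv (Fin.ext h)
      exact pickTerm_zero c (by have := m.2; have := v.2; omega)
    · intro h
      exact absurd (Finset.mem_univ m) h
  rw [Finset.sum_congr rfl fun m _ => key m]
  simp [Finset.sum_const]

lemma sum_NN_left (n : ℕ) (c : ℝ) :
    ∑ l : Fin n, pickTerm c (l.1 + 1) (n + 1) (n + 1) = 0 :=
  Finset.sum_eq_zero fun l _ => pickTerm_zero c (by have := l.2; omega)

lemma sum_NN_mid (n : ℕ) (c : ℝ) :
    ∑ m : Fin n, pickTerm c (n + 1) (m.1 + 1) (n + 1) = 0 :=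
  Finset.sum_eq_zero fun m _ => pickTerm_zero c (by have := m.2; omega)

lemma sum_NN_right (n : ℕ) (c : ℝ) :
    ∑ v : Fin n, pickTerm c (n + 1) (n + 1) (v.1 + 1) = 0 :=
  Finset.sum_eq_zero fun v _ => pickTerm_zero c (by have := v.2; omega)

lemma triple_sum (c : ℝ) (hc : 0 < c) (n : ℕ) :
    ∑ l : Fin n, ∑ m : Fin n, ∑ v : Fin n, pickTerm c (l.1 + 1) (m.1 + 1) (v.1 + 1)
    = (n : ℝ) * ((n : ℝ) - 1) / (((n : ℝ) + 1) * c) := by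
  induction n with
  | zero => simp
  | succ n ih =>
    simp only [Fin.sum_univ_castSucc, Fin.coe_castSucc, Fin.val_last,
      Finset.sum_add_distrib]
    rw [ih, sum_vlast n c hc, sum_mlast n c hc, sum_llast n c hc,
      sum_NN_left, sum_NN_mid, sum_NN_right,
      pickTerm_diag c hc (by omega : 0 < n + 1)]
    push_cast
    have h1 : ((n : ℝ) + 1) ≠ 0 := by positivity
    have h2 : ((n : ℝ) + 1 + 1) ≠ 0 := by positivity
    field_simp
    ring

theorem pick_invariant_flat_affine_sphere (n₀ : ℕ) (hn : 2 ≤ n₀) (c : ℝ) (hc : 0 < c) :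
    (1 / ((n₀ : ℝ) * ((n₀ : ℝ) - 1))) *
      ∑ l : Fin n₀, ∑ m : Fin n₀, ∑ v : Fin n₀,
        invMetricFlat c (l.1 + 1) * invMetricFlat c (m.1 + 1) * invMetricFlat c (v.1 + 1) *
          (fubiniPickFlat c (l.1 + 1) (m.1 + 1) (v.1 + 1)) ^ 2 =
      1 / (((n₀ : ℝ) + 1) * c) := by
  have h := triple_sum c hc n₀
  simp only [pickTerm] at h
  rw [h]
  have hn' : (2:ℝ) ≤ (n₀:ℝ) := by exact_mod_cast hn
  have h1 : (n₀:ℝ) ≠ 0 := by linarith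
  have h2 : (n₀:ℝ) - 1 ≠ 0 := by intro h; nlinarith
  have h3 : (n₀:ℝ) + 1 ≠ 0 := by linarith
  field_simp
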